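/- Let g ∈ SL(n, ℝ) have Iwasawa decomposition g = n·a·k with n unit upper triangular, a = diag(y₁/y₀, …, y_n/y_{n−1}) (y₀ = y_n = 1, y_i > 0), k ∈ SO(n). Then for each j ∈ {1,…,n−1}, y_j equals the inverse of the Euclidean norm of the vector of all order-(n−j) anti-leading minors of g: y_j = ( Σ_σ ( g(j+1,…,n | σ(1),…,σ(n−j)) )² )^{−1/2}, where σ ranges over (n−j)-element subsets of {1,…,n} in increasing order. -/

import Mathlib

open Matrix Finset Equiv

private theorem strictMono_eq_of_image {m n : ℕ} {σ τ : Fin m → Fin n}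
    (hσ : StrictMono σ) (hτ : StrictMono τ)
    (h : Finset.image σ Finset.univ = Finset.image τ Finset.univ) : σ = τ := by
  have hc : (Finset.image σ Finset.univ).card = m := by
    rw [Finset.card_image_of_injective _ hσ.injective, Finset.card_univ, Fintype.card_fin]
  have h1 : σ = (Finset.image σ Finset.univ).orderEmbOfFin hc :=
    Finset.orderEmbOfFin_unique hc (fun i => Finset.mem_image_of_mem _ (Finset.mem_univ i)) hσ
  have h2 : τ = (Finset.image σ Finset.univ).orderEmbOfFin hc :=
    Finset.orderEmbOfFin_unique hc
      (fun i => h ▸ Finset.mem_image_of_mem _ (Finset.mem_univ i)) hτ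
  rw [h1, h2]

private theorem inj_exists {m n : ℕ} {f : Fin m → Fin n} (hf : Function.Injective f) :
    ∃ (σ : Fin m → Fin n) (π : Perm (Fin m)), StrictMono σ ∧ σ ∘ π = f := by
  set s := Finset.image f Finset.univ with hs
  have hc : s.card = m := by
    rw [hs, Finset.card_image_of_injective _ hf, Finset.card_univ, Fintype.card_fin]
  have hmem : ∀ i, f i ∈ s := fun i => Finset.mem_image_of_mem _ (Finset.mem_univ i)
  set e : Fin m → Fin m := fun i => (s.orderIsoOfFin hc).symm ⟨f i, hmem i⟩ with he
  have einj : Function.Injective e := by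
    intro a b hab
    have := (s.orderIsoOfFin hc).symm.injective hab
    exact hf (Subtype.mk_eq_mk.mp this)
  refine ⟨⇑(s.orderEmbOfFin hc), Equiv.ofBijective e
    (Finite.injective_iff_bijective.mp einj), (s.orderEmbOfFin hc).strictMono, ?_⟩
  funext i
  simp only [Function.comp_apply, Equiv.ofBijective_apply, he]
  rw [← Finset.coe_orderIsoOfFin_apply, OrderIso.apply_symm_apply]

private theorem sumF (m n : ℕ) (M : Matrix (Fin m) (Fin n) ℝ) :
    (M * Mᵀ).det = ∑ f : Fin m → Fin n, (∏ i, M i (f i)) * (M.submatrix id f).det := by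
  calc (M * Mᵀ).det
      = ∑ τ : Perm (Fin m), Perm.sign τ * ∏ i, ∑ c, M (τ i) c * M i c := by
        simp [det_apply', mul_apply, transpose_apply]
    _ = ∑ τ : Perm (Fin m), ∑ f : Fin m → Fin n,
          (Perm.sign τ : ℝ) * ∏ i, M (τ i) (f i) * M i (f i) := by
        refine Finset.sum_congr rfl fun τ _ => ?_
        rw [Finset.prod_univ_sum, Finset.mul_sum]
        simp [Fintype.piFinset_univ]
    _ = ∑ f : Fin m → Fin n, ∑ τ : Perm (Fin m),
          (Perm.sign τ : ℝ) * ∏ i, M (τ i) (f i) * M i (f i) := Finset.sum_comm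
    _ = ∑ f : Fin m → Fin n, (∏ i, M i (f i)) * (M.submatrix id f).det := by
        refine Finset.sum_congr rfl fun f _ => ?_
        rw [det_apply', Finset.mul_sum]
        refine Finset.sum_congr rfl fun τ _ => ?_
        simp only [submatrix_apply, id_eq, Finset.prod_mul_distrib]
        ring

private theorem inner_perm_sum {m n : ℕ} (M : Matrix (Fin m) (Fin n) ℝ)
    (σ : Fin m → Fin n) :
    ∑ π : Perm (Fin m), (∏ i, M i (σ (π i))) * (M.submatrix id (σ ∘ π)).det
      = ((M.submatrix id σ).det) ^ 2 := by
  have hdet : ∀ π : Perm (Fin m), (M.submatrix id (σ ∘ π)).det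
      = (Perm.sign π : ℝ) * (M.submatrix id σ).det := by
    intro π
    have : M.submatrix id (σ ∘ π) = (M.submatrix id σ).submatrix id π := rfl
    rw [this, det_permute']
  have hprod : ∀ π : Perm (Fin m), (∏ i, M i (σ (π i)))
      = ∏ i, M (π⁻¹ i) (σ i) := by
    intro π
    rw [← Equiv.prod_comp π⁻¹ (fun i => M i (σ (π i)))]
    simp
  calc ∑ π : Perm (Fin m), (∏ i, M i (σ (π i))) * (M.submatrix id (σ ∘ π)).det
      = (∑ π : Perm (Fin m), (Perm.sign π : ℝ) * ∏ i, M (π⁻¹ i) (σ i))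
          * (M.submatrix id σ).det := by
        rw [Finset.sum_mul]
        refine Finset.sum_congr rfl fun π _ => ?_
        rw [hdet, hprod]; ring
    _ = (∑ π : Perm (Fin m), (Perm.sign π : ℝ) * ∏ i, M (π i) (σ i))
          * (M.submatrix id σ).det := by
        congr 1
        refine Fintype.sum_equiv (Equiv.inv (Perm (Fin m))) _ _ fun π => ?_
        simp
    _ = ((M.submatrix id σ).det) ^ 2 := by
        rw [sq]
        congr 1
        rw [det_apply']
        simp [submatrix_apply]

private theorem cauchy_binet_self (m n : ℕ) (M : Matrix (Fin m) (Fin n) ℝ) :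
    (M * Mᵀ).det =
      ∑ σ ∈ Finset.univ.filter (fun σ : Fin m → Fin n => StrictMono σ),
        ((M.submatrix id σ).det) ^ 2 := by
  rw [sumF]
  rw [← Finset.sum_filter_add_sum_filter_not Finset.univ
    (fun f : Fin m → Fin n => Function.Injective f)]
  have h0 : ∑ f ∈ Finset.univ.filter
      (fun f : Fin m → Fin n => ¬ Function.Injective f),
      (∏ i, M i (f i)) * (M.submatrix id f).det = 0 := by
    refine Finset.sum_eq_zero fun f hf => ?_
    have hf2 : ¬ Function.Injective f := (Finset.mem_filter.mp hf).2
    simp only [Function.Injective] at hf2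
    push_neg at hf2
    obtain ⟨a, b, hab, hne⟩ := hf2
    rw [det_zero_of_column_eq hne (fun k => by simp [hab]), mul_zero]
  rw [h0, add_zero]
  have key : ∑ f ∈ Finset.univ.filter (fun f : Fin m → Fin n => Function.Injective f),
      (∏ i, M i (f i)) * (M.submatrix id f).det
    = ∑ p ∈ (Finset.univ.filter (fun σ : Fin m → Fin n => StrictMono σ)) ×ˢ
        (Finset.univ : Finset (Perm (Fin m))),
      (∏ i, M i (p.1 (p.2 i))) * (M.submatrix id (p.1 ∘ p.2)).det := by
    refine (Finset.sum_bij (fun p _ => p.1 ∘ p.2) ?_ ?_ ?_ ?_).symm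
    · rintro ⟨σ, π⟩ hp
      simp only [Finset.mem_product, Finset.mem_filter] at hp
      simp only [Finset.mem_filter, Finset.mem_univ, true_and]
      exact hp.1.2.injective.comp π.injective
    · rintro ⟨σ₁, π₁⟩ h₁ ⟨σ₂, π₂⟩ h₂ heq
      simp only [Finset.mem_product, Finset.mem_filter] at h₁ h₂
      have heq' : σ₁ ∘ ⇑π₁ = σ₂ ∘ ⇑π₂ := heq
      have himg : Finset.image σ₁ Finset.univ = Finset.image σ₂ Finset.univ := by
        have e1 : Finset.image (σ₁ ∘ π₁) Finset.univ = Finset.image σ₁ Finset.univ := by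
          rw [← Finset.image_image]
          congr 1
          exact Finset.image_univ_equiv π₁
        have e2 : Finset.image (σ₂ ∘ π₂) Finset.univ = Finset.image σ₂ Finset.univ := by
          rw [← Finset.image_image]
          congr 1
          exact Finset.image_univ_equiv π₂
        rw [← e1, ← e2, heq']
      have hσ : σ₁ = σ₂ := strictMono_eq_of_image h₁.1.2 h₂.1.2 himg
      subst hσ
      have hπ : π₁ = π₂ := by
        ext i
        exact congrArg Fin.val (h₁.1.2.injective (congrFun heq' i))
      rw [hπ]
    · intro f hf
      simp only [Finset.mem_filter, Finset.mem_univ, true_and] at hf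
      obtain ⟨σ, π, hσ, hfp⟩ := inj_exists hf
      exact ⟨⟨σ, π⟩, by simp [Finset.mem_product, hσ], hfp⟩
    · rintro ⟨σ, π⟩ _
      simp [Function.comp]
  rw [key, Finset.sum_product]
  refine Finset.sum_congr rfl fun σ hσ => ?_
  exact inner_perm_sum M σ

private theorem prod_tel (y : ℕ → ℝ) (j : ℕ) :
    ∀ m : ℕ, (∀ k, k ≤ m → y (j + k) ≠ 0) →
      ∏ i ∈ Finset.range m, y (j + i + 1) / y (j + i) = y (j + m) / y j := by
  intro m
  induction m with
  | zero => intro h; simp [div_self (by simpa using h 0 (le_refl 0))]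
  | succ m ih =>
    intro h
    rw [Finset.prod_range_succ, ih (fun k hk => h k (hk.trans (Nat.le_succ m)))]
    have h1 : y (j + m) ≠ 0 := h m (Nat.le_succ m)
    have h2 : y j ≠ 0 := by simpa using h 0 (Nat.zero_le _)
    field_simp
    ring_nf


/-- For `g ∈ SL(n, ℝ)` with Iwasawa decomposition `g = n·a·k`, the dilaton `y_j` is the
inverse of the Euclidean norm of the vector of all anti-leading minors of `g` of order
`n - j` (the generalized Plücker coordinates). -/
theorem stmt_16 (n : ℕ) (g N A K : Matrix (Fin n) (Fin n) ℝ)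
    (hg : g.det = 1) (hdec : g = N * A * K)
    (hNd : ∀ i, N i i = 1) (hN0 : ∀ i j : Fin n, j < i → N i j = 0)
    (y : ℕ → ℝ) (hy0 : y 0 = 1) (hyn : y n = 1) (hypos : ∀ i, i ≤ n → 0 < y i)
    (hA : ∀ i j : Fin n, i ≠ j → A i j = 0)
    (hAy : ∀ i : Fin n, A i i = y (i.1 + 1) / y i.1)
    (hK : K * K.transpose = 1) (hKdet : K.det = 1) :
    ∀ j : ℕ, (hj1 : 1 ≤ j) → (hj2 : j ≤ n - 1) →
      y j =
        (Real.sqrt (∑ σ ∈ Finset.univ.filter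
            (fun σ : Fin (n - j) → Fin n => ∀ a b : Fin (n - j), a < b → σ a < σ b),
          ((g.submatrix (fun i : Fin (n - j) => (⟨j + i.1, by have := i.2; omega⟩ : Fin n))
              σ).det) ^ 2))⁻¹ := by
  intro j hj1 hj2
  have hjn : j < n := by omega
  set m := n - j with hm
  set rows : Fin m → Fin n := fun i => (⟨j + i.1, by have := i.2; omega⟩ : Fin n) with hrows
  set M : Matrix (Fin m) (Fin n) ℝ := g.submatrix rows id with hM
  -- rewrite the sum as the filter over StrictMono applied to M
  have hsum : (∑ σ ∈ Finset.univ.filter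
        (fun σ : Fin m → Fin n => ∀ a b : Fin m, a < b → σ a < σ b),
      ((g.submatrix rows σ).det) ^ 2)
      = ∑ σ ∈ Finset.univ.filter (fun σ : Fin m → Fin n => StrictMono σ),
          ((M.submatrix id σ).det) ^ 2 := by
    apply Finset.sum_congr
    · apply Finset.filter_congr
      intro σ _
      constructor
      · intro h a b hab; exact h a b hab
      · intro h a b hab; exact h hab
    · intro σ _; rfl
  -- entries of N*A
  set B : Matrix (Fin n) (Fin n) ℝ := N * A with hB
  have hNA : ∀ r c : Fin n, B r c = N r c * A c c := by
    intro r c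
    rw [hB, mul_apply]
    rw [Finset.sum_eq_single c]
    · intro k _ hk; rw [hA k c hk, mul_zero]
    · intro h; exact absurd (Finset.mem_univ c) h
  have hNA0 : ∀ r c : Fin n, c < r → B r c = 0 := by
    intro r c hcr; rw [hNA, hN0 r c hcr, zero_mul]
  set P : Matrix (Fin m) (Fin n) ℝ := B.submatrix rows id with hP
  set T : Matrix (Fin m) (Fin m) ℝ := B.submatrix rows rows with hT
  -- M = P * K
  have hMPK : M = P * K := by
    rw [hM, hdec]
    rw [Matrix.submatrix_mul B K rows (id : Fin n → Fin n) (id : Fin n → Fin n)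
      Function.bijective_id]
    rw [Matrix.submatrix_id_id]
  -- M * Mᵀ = P * Pᵀ
  have hMMt : M * Mᵀ = P * Pᵀ := by
    rw [hMPK, Matrix.transpose_mul, Matrix.mul_assoc, ← Matrix.mul_assoc K, hK,
      Matrix.one_mul]
  -- P * Pᵀ = T * Tᵀ
  have hPPt : P * Pᵀ = T * Tᵀ := by
    ext i i'
    simp only [mul_apply, transpose_apply, hP, hT, submatrix_apply, id_eq]
    rw [← Finset.sum_filter_add_sum_filter_not Finset.univ (fun c : Fin n => j ≤ c.1)]
    have hz : ∑ c ∈ Finset.univ.filter (fun c : Fin n => ¬ j ≤ c.1),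
        B (rows i) c * B (rows i') c = 0 := by
      refine Finset.sum_eq_zero fun c hc => ?_
      simp only [Finset.mem_filter, not_le] at hc
      have : c < rows i := by
        simp only [hrows, Fin.lt_def]
        omega
      rw [hNA0 _ _ this, zero_mul]
    rw [hz, add_zero]
    refine (Finset.sum_nbij' (i := fun d : Fin m => rows d)
      (j := fun c : Fin n => (⟨c.1 - j, by have := c.2; omega⟩ : Fin m)) ?_ ?_ ?_ ?_ ?_).symm
    · intro d _
      simp only [Finset.mem_filter, Finset.mem_univ, true_and, hrows]
      omega
    · intro c _; exact Finset.mem_univ _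
    · intro d _
      simp only [hrows]
      ext
      simp
    · intro c hc
      simp only [Finset.mem_filter] at hc
      simp only [hrows]
      ext
      simp
      omega
    · intro d _; rfl
  -- T is upper triangular
  have hTtri : T.BlockTriangular id := by
    intro a b hba
    simp only [hT, submatrix_apply]
    apply hNA0
    simp only [hrows, Fin.lt_def]
    simp only [id_eq] at hba
    have : b.1 < a.1 := hba
    omega
  have hyj : y j ≠ 0 := (hypos j (by omega)).ne'
  have hdetT : T.det = (y j)⁻¹ := by
    rw [Matrix.det_of_upperTriangular hTtri]
    have : ∀ i : Fin m, T i i = y (j + i.1 + 1) / y (j + i.1) := by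
      intro i
      simp only [hT, submatrix_apply, hNA, hNd, one_mul, hAy, hrows]
    rw [Finset.prod_congr rfl (fun i _ => this i)]
    rw [Fin.prod_univ_eq_prod_range (fun i => y (j + i + 1) / y (j + i)) m]
    rw [prod_tel y j m (fun k hk => (hypos (j + k) (by omega)).ne')]
    rw [show j + m = n from by omega, hyn]
    rw [one_div]
  -- assemble
  rw [hsum, ← cauchy_binet_self m n M, hMMt, hPPt, Matrix.det_mul, Matrix.det_transpose,
    hdetT]
  rw [show (y j)⁻¹ * (y j)⁻¹ = ((y j)⁻¹) ^ 2 from (sq _).symm]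
  rw [Real.sqrt_sq (le_of_lt (inv_pos.mpr (hypos j (by omega))))]
  rw [inv_inv]
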